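/- There exists a constant C₀ > 0 such that for every f ∈ L¹(ℝ²) ∩ L^∞(ℝ²), the convolution K * f satisfies ‖K * f‖_{L^∞} ≤ C₀ ‖f‖_{L¹}^{1/2} ‖f‖_{L^∞}^{1/2}, where K(x) = x^⊥/(2π|x|²). -/

import Mathlib

open MeasureTheory Metric Set Filter RealInnerProductSpace
open scoped ENNReal
noncomputable section
abbrev E2 := EuclideanSpace ℝ (Fin 2)
def perp (x : E2) : E2 := WithLp.toLp 2 ![-x 1, x 0]
def K (x : E2) : E2 := (1/(2 * Real.pi * ‖x‖^2) : ℝ) • perp x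

lemma norm_perp (x : E2) : ‖perp x‖ = ‖x‖ := by
  rw [EuclideanSpace.norm_eq, EuclideanSpace.norm_eq]
  simp [perp, Fin.sum_univ_two, add_comm]

lemma norm_K (x : E2) : ‖K x‖ = 1/(2 * Real.pi * ‖x‖) := by
  rcases eq_or_ne x 0 with rfl | hx
  · simp [K, norm_smul, norm_perp]
  · have hx' : (0:ℝ) < ‖x‖ := norm_pos_iff.mpr hx
    rw [K, norm_smul, norm_perp, Real.norm_eq_abs, abs_of_pos (by positivity)]
    field_simp

lemma volume_ball_E2 (r : ℝ) (hr : 0 ≤ r) :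
    volume (ball (0:E2) r) = ENNReal.ofReal (r^2) * volume (ball (0:E2) 1) := by
  have := Measure.addHaar_ball (volume : Measure E2) 0 hr
  simpa [finrank_euclideanSpace_fin] using this

lemma key (R : ℝ) (hR : 0 < R) :
    ∫⁻ z in ball (0:E2) R, ENNReal.ofReal ‖z‖⁻¹ ≤
      ENNReal.ofReal R * (4 * volume (ball (0:E2) 1)) := by
  set V := volume (ball (0:E2) 1) with hV
  set A : ℕ → Set E2 := fun k => ball 0 (R/2^k) \ ball 0 (R/2^(k+1)) with hA
  have hcover : ball (0:E2) R ⊆ {0} ∪ ⋃ k, A k := by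
    intro z hz
    rcases eq_or_ne z 0 with rfl | hz0
    · exact Or.inl rfl
    have hzn : (0:ℝ) < ‖z‖ := norm_pos_iff.mpr hz0
    have hP : ∃ k : ℕ, R / 2^(k+1) ≤ ‖z‖ := by
      obtain ⟨n, hn⟩ := pow_unbounded_of_one_lt (R / ‖z‖) (one_lt_two (α := ℝ))
      refine ⟨n, ?_⟩
      rw [div_le_iff₀ (by positivity)]
      have : R / ‖z‖ < 2^(n+1) := hn.trans (by
        have : (2:ℝ)^n < 2^(n+1) := by
          exact pow_lt_pow_right₀ one_lt_two (Nat.lt_succ_self n)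
        linarith)
      nlinarith [div_lt_iff₀ hzn |>.mp this]
    right
    refine mem_iUnion.mpr ⟨Nat.find hP, ?_⟩
    constructor
    · have h2 : ‖z‖ < R / 2^(Nat.find hP) := by
        rcases Nat.eq_zero_or_pos (Nat.find hP) with h0 | h0
        · rw [h0]; simpa using mem_ball_zero_iff.mp hz
        · have := Nat.find_min hP (Nat.sub_lt h0 one_pos)
          push_neg at this
          have e : Nat.find hP - 1 + 1 = Nat.find hP := Nat.succ_pred_eq_of_pos h0
          rwa [e] at this
      exact mem_ball_zero_iff.mpr h2
    · intro hmem
      exact absurd (mem_ball_zero_iff.mp hmem) (not_lt.mpr (Nat.find_spec hP))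
  calc ∫⁻ z in ball (0:E2) R, ENNReal.ofReal ‖z‖⁻¹
      ≤ ∫⁻ z in ({0} ∪ ⋃ k, A k : Set E2), ENNReal.ofReal ‖z‖⁻¹ :=
        lintegral_mono_set hcover
    _ ≤ (∫⁻ z in ({0}: Set E2), ENNReal.ofReal ‖z‖⁻¹)
        + ∫⁻ z in (⋃ k, A k), ENNReal.ofReal ‖z‖⁻¹ := lintegral_union_le _ _ _
    _ ≤ 0 + ∑' k, ∫⁻ z in A k, ENNReal.ofReal ‖z‖⁻¹ := by
        gcongr
        · rw [setLIntegral_measure_zero _ _ (measure_singleton 0)]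
        · exact lintegral_iUnion_le _ _
    _ = ∑' k, ∫⁻ z in A k, ENNReal.ofReal ‖z‖⁻¹ := by rw [zero_add]
    _ ≤ ∑' k, ENNReal.ofReal (2 * R) * ENNReal.ofReal (1/2:ℝ) ^ k * V := by
        gcongr with k
        have hbd : ∫⁻ z in A k, ENNReal.ofReal ‖z‖⁻¹
            ≤ ENNReal.ofReal (2^(k+1)/R) * volume (A k) := by
          rw [← setLIntegral_const]
          refine setLIntegral_mono' (measurableSet_ball.diff measurableSet_ball) ?_
          intro z hz
          refine ENNReal.ofReal_le_ofReal ?_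
          have h1 : R / 2^(k+1) ≤ ‖z‖ := by
            have := hz.2
            rw [mem_ball_zero_iff] at this
            exact not_lt.mp this
          have h2 : (0:ℝ) < R / 2^(k+1) := by positivity
          calc ‖z‖⁻¹ ≤ (R / 2^(k+1))⁻¹ := inv_anti₀ h2 h1
            _ = 2^(k+1)/R := by field_simp
        refine hbd.trans ?_
        have hvol : volume (A k) ≤ ENNReal.ofReal ((R/2^k)^2) * V := by
          rw [← volume_ball_E2 _ (by positivity)]
          exact measure_mono diff_subset
        calc ENNReal.ofReal (2^(k+1)/R) * volume (A k)
            ≤ ENNReal.ofReal (2^(k+1)/R) * (ENNReal.ofReal ((R/2^k)^2) * V) := by gcongr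
          _ = ENNReal.ofReal (2^(k+1)/R * (R/2^k)^2) * V := by
              rw [ENNReal.ofReal_mul (by positivity), mul_assoc]
          _ = ENNReal.ofReal (2 * R * (1/2:ℝ)^k) * V := by
              congr 1
              refine congrArg _ ?_
              field_simp
              have h : (2:ℝ)^k ≠ 0 := by positivity
              rw [one_div, inv_pow, pow_succ, sq, mul_right_comm, mul_assoc (2 ^ k), mul_inv_cancel₀ h, mul_one]
          _ = ENNReal.ofReal (2*R) * ENNReal.ofReal (1/2:ℝ) ^ k * V := by
              rw [ENNReal.ofReal_mul (by positivity), ENNReal.ofReal_pow (by norm_num)]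
    _ = ENNReal.ofReal (2*R) * (∑' k, ENNReal.ofReal (1/2:ℝ) ^ k) * V := by
        rw [ENNReal.tsum_mul_right, ENNReal.tsum_mul_left]
    _ = ENNReal.ofReal R * (4 * V) := by
        rw [ENNReal.tsum_geometric]
        have h2 : ENNReal.ofReal (1/2:ℝ) = 2⁻¹ := by
          rw [one_div, ENNReal.ofReal_inv_of_pos two_pos, ENNReal.ofReal_ofNat]
        rw [h2]
        have : (1 - 2⁻¹ : ℝ≥0∞)⁻¹ = 2 := by
          rw [ENNReal.one_sub_inv_two, inv_inv]
        rw [this, ENNReal.ofReal_mul (by norm_num), ENNReal.ofReal_ofNat]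
        ring

theorem stmt2 :
    ∃ C₀ : ℝ, 0 < C₀ ∧
      ∀ f : E2 → ℝ, MemLp f 1 (volume : Measure E2) → MemLp f ⊤ (volume : Measure E2) →
        ∀ x : E2, ‖∫ y : E2, f y • K (x - y)‖ ≤
          C₀ * (eLpNorm f 1 volume).toReal ^ (1/2 : ℝ) *
            (eLpNorm f ⊤ volume).toReal ^ (1/2 : ℝ) := by
  have hπ : (0:ℝ) < Real.pi := Real.pi_pos
  set V : ℝ≥0∞ := volume (ball (0:E2) 1) with hVdef
  have hVlt : V < ∞ := measure_ball_lt_top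
  set Vr : ℝ := V.toReal with hVrdef
  have hVr : 0 ≤ Vr := ENNReal.toReal_nonneg
  refine ⟨4*Vr/(2*Real.pi) + 1/(2*Real.pi) + 1, by positivity, ?_⟩
  set C₀ : ℝ := 4*Vr/(2*Real.pi) + 1/(2*Real.pi) + 1 with hC₀
  intro f hf1 hfi x
  set ε1 := eLpNorm f 1 volume with hε1
  set εi := eLpNorm f ⊤ volume with hεi
  set M1 := ε1.toReal with hM1def
  set Mi := εi.toReal with hMidef
  -- degenerate case
  by_cases hz : ε1 = 0 ∨ εi = 0
  · have hf0 : f =ᵐ[volume] 0 := by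
      rcases hz with h | h
      · exact (eLpNorm_eq_zero_iff hf1.1 one_ne_zero).mp h
      · exact (eLpNorm_eq_zero_iff hf1.1 (by simp)).mp h
    have : (∫ y : E2, f y • K (x - y)) = 0 := by
      rw [integral_congr_ae (g := fun _ => (0:E2))]
      · exact integral_zero _ _
      · filter_upwards [hf0] with y hy
        simp [hy]
    rw [this, norm_zero]
    rcases hz with h | h
    · have : M1 = 0 := by rw [hM1def, h, ENNReal.toReal_zero]
      rw [this, Real.zero_rpow (by norm_num)]
      simp
    · have : Mi = 0 := by rw [hMidef, h, ENNReal.toReal_zero]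
      rw [this, Real.zero_rpow (by norm_num)]
      simp
  push_neg at hz
  have hε1t : ε1 ≠ ∞ := hf1.2.ne
  have hεit : εi ≠ ∞ := hfi.2.ne
  have hM1 : 0 < M1 := ENNReal.toReal_pos hz.1 hε1t
  have hMi : 0 < Mi := ENNReal.toReal_pos hz.2 hεit
  set R : ℝ := Real.sqrt (M1 / Mi) with hRdef
  have hR : 0 < R := Real.sqrt_pos.mpr (by positivity)
  -- pointwise norm identity
  have hnorm : ∀ y : E2, ENNReal.ofReal ‖f y • K (x - y)‖
      = ENNReal.ofReal |f y| * ENNReal.ofReal (1/(2*Real.pi*‖x - y‖)) := by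
    intro y
    rw [norm_smul, Real.norm_eq_abs, norm_K, ENNReal.ofReal_mul (abs_nonneg _)]
  -- step A
  have hA := norm_integral_le_lintegral_norm (μ := (volume : Measure E2))
      (f := fun y => f y • K (x - y))
  set g : E2 → ℝ≥0∞ := fun y =>
      ENNReal.ofReal |f y| * ENNReal.ofReal (1/(2*Real.pi*‖x - y‖)) with hg
  have hTg : (∫⁻ y, ENNReal.ofReal ‖f y • K (x - y)‖) = ∫⁻ y, g y :=
    lintegral_congr fun y => hnorm y
  -- piece 1
  have hpre : (fun y : E2 => x - y) ⁻¹' (ball 0 R) = ball x R := by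
    ext y
    simp [mem_ball, dist_eq_norm, norm_sub_rev]
  have hcov : (∫⁻ y in ball x R, ENNReal.ofReal (1/(2*Real.pi*‖x - y‖)))
      = ∫⁻ z in ball (0:E2) R, ENNReal.ofReal (1/(2*Real.pi*‖z‖)) := by
    rw [← hpre]
    simpa using (Measure.measurePreserving_sub_left (volume : Measure E2) x).setLIntegral_comp_preimage_emb
      (MeasurableEquiv.subLeft x).measurableEmbedding
      (fun z => ENNReal.ofReal (1/(2*Real.pi*‖z‖))) (ball 0 R)
  have hball : (∫⁻ z in ball (0:E2) R, ENNReal.ofReal (1/(2*Real.pi*‖z‖)))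
      ≤ ENNReal.ofReal (1/(2*Real.pi)) * (ENNReal.ofReal R * (4 * V)) := by
    have heq : ∀ z : E2, ENNReal.ofReal (1/(2*Real.pi*‖z‖))
        = ENNReal.ofReal (1/(2*Real.pi)) * ENNReal.ofReal ‖z‖⁻¹ := by
      intro z
      rw [← ENNReal.ofReal_mul (by positivity)]
      congr 1
      rw [one_div, one_div, mul_inv]
    calc (∫⁻ z in ball (0:E2) R, ENNReal.ofReal (1/(2*Real.pi*‖z‖)))
        = ∫⁻ z in ball (0:E2) R, ENNReal.ofReal (1/(2*Real.pi)) * ENNReal.ofReal ‖z‖⁻¹ :=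
          lintegral_congr fun z => heq z
      _ = ENNReal.ofReal (1/(2*Real.pi)) * ∫⁻ z in ball (0:E2) R, ENNReal.ofReal ‖z‖⁻¹ :=
          lintegral_const_mul' _ _ ENNReal.ofReal_ne_top
      _ ≤ _ := by gcongr; exact key R hR
  have hae : ∀ᵐ y : E2, ENNReal.ofReal |f y| ≤ εi := by
    have h := ae_le_eLpNormEssSup (f := f) (μ := (volume : Measure E2))
    filter_upwards [h] with y hy
    rw [← Real.norm_eq_abs, ofReal_norm, hεi, eLpNorm_exponent_top]
    exact hy
  have hp1 : (∫⁻ y in ball x R, g y)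
      ≤ εi * (ENNReal.ofReal (1/(2*Real.pi)) * (ENNReal.ofReal R * (4 * V))) := by
    calc (∫⁻ y in ball x R, g y)
        ≤ ∫⁻ y in ball x R, εi * ENNReal.ofReal (1/(2*Real.pi*‖x - y‖)) := by
          refine lintegral_mono_ae ?_
          filter_upwards [ae_restrict_of_ae hae] with y hy
          exact mul_le_mul_left hy _
      _ = εi * ∫⁻ y in ball x R, ENNReal.ofReal (1/(2*Real.pi*‖x - y‖)) :=
          lintegral_const_mul' _ _ hεit
      _ ≤ _ := by rw [hcov]; exact mul_le_mul_right hball _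
  -- piece 2
  have hp2 : (∫⁻ y in (ball x R)ᶜ, g y) ≤ ε1 * ENNReal.ofReal (1/(2*Real.pi*R)) := by
    calc (∫⁻ y in (ball x R)ᶜ, g y)
        ≤ ∫⁻ y in (ball x R)ᶜ, ENNReal.ofReal |f y| * ENNReal.ofReal (1/(2*Real.pi*R)) := by
          refine setLIntegral_mono' measurableSet_ball.compl ?_
          intro y hy
          refine mul_le_mul_right (ENNReal.ofReal_le_ofReal ?_) _
          have hyR : R ≤ ‖x - y‖ := by
            have := hy
            rw [mem_compl_iff, mem_ball, not_lt, dist_eq_norm, norm_sub_rev] at this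
            exact this
          apply one_div_le_one_div_of_le (by positivity)
          nlinarith
      _ ≤ ∫⁻ y, ENNReal.ofReal |f y| * ENNReal.ofReal (1/(2*Real.pi*R)) :=
          setLIntegral_le_lintegral _ _
      _ = (∫⁻ y, ENNReal.ofReal |f y|) * ENNReal.ofReal (1/(2*Real.pi*R)) :=
          lintegral_mul_const' _ _ ENNReal.ofReal_ne_top
      _ = ε1 * ENNReal.ofReal (1/(2*Real.pi*R)) := by
          congr 1
          rw [hε1, eLpNorm_one_eq_lintegral_enorm]
          refine lintegral_congr fun y => ?_
          rw [← Real.norm_eq_abs, ofReal_norm]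
  -- total ENNReal bound
  have htot : (∫⁻ y, ENNReal.ofReal ‖f y • K (x - y)‖)
      ≤ ENNReal.ofReal (Mi * ((1/(2*Real.pi)) * (R * (4 * Vr))) + M1 * (1/(2*Real.pi*R))) := by
    rw [hTg, ← lintegral_add_compl g (measurableSet_ball : MeasurableSet (ball x R))]
    have hεi' : εi = ENNReal.ofReal Mi := (ENNReal.ofReal_toReal hεit).symm
    have hε1' : ε1 = ENNReal.ofReal M1 := (ENNReal.ofReal_toReal hε1t).symm
    have hV' : V = ENNReal.ofReal Vr := (ENNReal.ofReal_toReal hVlt.ne).symm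
    calc (∫⁻ y in ball x R, g y) + ∫⁻ y in (ball x R)ᶜ, g y
        ≤ εi * (ENNReal.ofReal (1/(2*Real.pi)) * (ENNReal.ofReal R * (4 * V)))
          + ε1 * ENNReal.ofReal (1/(2*Real.pi*R)) := add_le_add hp1 hp2
      _ = ENNReal.ofReal (Mi * ((1/(2*Real.pi)) * (R * (4 * Vr))) + M1 * (1/(2*Real.pi*R))) := by
          rw [hεi', hε1', hV']
          rw [← ENNReal.ofReal_ofNat 4, ← ENNReal.ofReal_mul (by norm_num),
            ← ENNReal.ofReal_mul hR.le, ← ENNReal.ofReal_mul (by positivity),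
            ← ENNReal.ofReal_mul hMi.le, ← ENNReal.ofReal_mul hM1.le,
            ← ENNReal.ofReal_add (by positivity) (by positivity)]
  -- real arithmetic
  have hs1 : Real.sqrt M1 ^ 2 = M1 := Real.sq_sqrt hM1.le
  have hsi : Real.sqrt Mi ^ 2 = Mi := Real.sq_sqrt hMi.le
  have hs1p : 0 < Real.sqrt M1 := Real.sqrt_pos.mpr hM1
  have hsip : 0 < Real.sqrt Mi := Real.sqrt_pos.mpr hMi
  have hRe : R = Real.sqrt M1 / Real.sqrt Mi := by rw [hRdef, Real.sqrt_div hM1.le]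
  have hB : Mi * ((1/(2*Real.pi)) * (R * (4 * Vr))) + M1 * (1/(2*Real.pi*R))
      ≤ C₀ * (Real.sqrt M1 * Real.sqrt Mi) := by
    have e1 : Mi * R = Real.sqrt M1 * Real.sqrt Mi := by
      rw [hRe]; field_simp; nlinarith [hsi]
    have e2 : M1 / R = Real.sqrt M1 * Real.sqrt Mi := by
      rw [hRe]; field_simp; nlinarith [hs1]
    have h1 : Mi * ((1/(2*Real.pi)) * (R * (4 * Vr)))
        = (4*Vr/(2*Real.pi)) * (Mi * R) := by ring
    have h2 : M1 * (1/(2*Real.pi*R)) = (1/(2*Real.pi)) * (M1 / R) := by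
      field_simp
    rw [h1, h2, e1, e2, hC₀]
    have hss : 0 ≤ Real.sqrt M1 * Real.sqrt Mi := by positivity
    nlinarith [hss]
  have hfinal : (∫⁻ y, ENNReal.ofReal ‖f y • K (x - y)‖).toReal
      ≤ C₀ * (Real.sqrt M1 * Real.sqrt Mi) := by
    refine le_trans (ENNReal.toReal_le_of_le_ofReal (by positivity) htot) hB
  calc ‖∫ y : E2, f y • K (x - y)‖ ≤ _ := hA
    _ ≤ C₀ * (Real.sqrt M1 * Real.sqrt Mi) := hfinal
    _ = C₀ * M1 ^ (1/2:ℝ) * Mi ^ (1/2:ℝ) := by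
        rw [← Real.sqrt_eq_rpow, ← Real.sqrt_eq_rpow, mul_assoc]
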